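/- For any string S with unique terminator and any pattern P of length m, the position heap search procedure is correct: position p is reported if and only if P occurs in S at position p. Formally, in the simplified case m ≤ height of the heap and letting v be the deepest node whose path label is a prefix of P with depth(v) = m: P occurs at position p in S if and only if either the node labelled p is in the subtree of v, or the node labelled p lies on the path from the root to v and its maximal-reach pointer points into the subtree of v. -/
import Mathlib


/-- Correctness of the position-heap search procedure in the
simplified case where the deepest node `v` whose path label is a prefix of the
pattern `P` has depth `m = |P|` (so `v`'s path label is `P` itself): `P`
occurs in `S` at position `p` (i.e. `P` is a prefix of `S[p..n]`) if and only
if the node labelled `p` is in the subtree of `v` (i.e. `v`'s path label is a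
prefix of its path label), or the node labelled `p` lies on the path from the
root to `v` (its path label is a prefix of `v`'s) and its maximal-reach
pointer points into the subtree of `v`. -/
theorem positionHeap_search_correct
    {α : Type} [DecidableEq α]
    (S T : List α) (c : α) (hS : S = T ++ [c]) (hc : c ∉ T)
    (nodes : Finset (List α)) (lab : List α → ℕ) (nodeOf mrOf : ℕ → List α)
    (hpc : ∀ p ∈ nodes, ∀ q : List α, q <+: p → q ∈ nodes)
    (hbij : Set.BijOn lab ↑nodes (Set.Iic S.length))
    (hroot : ([] : List α) ∈ nodes ∧ lab [] = 0)
    (hheap : ∀ p ∈ nodes, ∀ q ∈ nodes, p <+: q → lab p ≤ lab q)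
    (hpath : ∀ p ∈ nodes, 1 ≤ lab p → p <+: S.drop (lab p - 1))
    (hnodeOf : ∀ i ≤ S.length, nodeOf i ∈ nodes ∧ lab (nodeOf i) = i)
    -- `mrOf i` is the maximal reach of the node labelled `i`: the deepest node
    -- whose path label is a prefix of `S[i..n]`
    (hmr : ∀ i : ℕ, 1 ≤ i → i ≤ S.length →
      mrOf i ∈ nodes ∧ mrOf i <+: S.drop (i - 1) ∧
      ∀ q ∈ nodes, q <+: S.drop (i - 1) → q.length ≤ (mrOf i).length)
    (P : List α) (m : ℕ) (hm : P.length = m)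
    (v : List α) (hv : v ∈ nodes) (hvP : v <+: P) (hvm : v.length = m)
    (hvdeep : ∀ q ∈ nodes, q <+: P → q.length ≤ v.length) :
    ∀ p : ℕ, 1 ≤ p → p ≤ S.length →
      (P <+: S.drop (p - 1) ↔
        (v <+: nodeOf p ∨ (nodeOf p <+: v ∧ v <+: mrOf p))) := by
  intro p hp1 hpn
  have hvPeq : v = P := hvP.eq_of_length (by omega)
  subst hvPeq
  obtain ⟨hnp, hlab⟩ := hnodeOf p hpn
  have hnpref : nodeOf p <+: S.drop (p - 1) := by have := hpath _ hnp (by rw [hlab]; exact hp1); rwa [hlab] at this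
  constructor
  · intro hOcc
    rcases List.prefix_or_prefix_of_prefix hOcc hnpref with h | h
    · exact Or.inl h
    · refine Or.inr ⟨h, ?_⟩
      obtain ⟨hmrn, hmrpref, hmrmax⟩ := hmr p hp1 hpn
      have hlen : v.length ≤ (mrOf p).length := hmrmax v hv hOcc
      rcases List.prefix_or_prefix_of_prefix hOcc hmrpref with h2 | h2
      · exact h2
      · exact h2.eq_of_length (by have := h2.length_le; omega) ▸ List.prefix_refl _
  · rintro (h | ⟨h1, h2⟩)
    · exact h.trans hnpref
    · exact h2.trans (hmr p hp1 hpn).2.1
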